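/- For every list l of n distinct elements over a linearly ordered type, the expected number of comparisons performed by randomized quicksort on l equals 2·(n+1)·H_n − 4·n. -/

import Mathlib

/-- The `n`-th harmonic number `H_n = ∑_{k=1}^{n} 1/k`. -/
noncomputable def harmonicNum (n : ℕ) : ℝ := ∑ k ∈ Finset.Icc 1 n, (1 : ℝ) / k

/-- The distribution of the number of comparisons performed by randomized quicksort:
a pivot index is chosen uniformly at random, the remaining `n - 1` elements are
partitioned (using `n - 1` comparisons) into those smaller and those larger than the
pivot, and the two parts are recursively sorted. -/
noncomputable def rquickCost {α : Type*} [LinearOrder α] : List α → PMF ℕ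
  | [] => PMF.pure 0
  | x :: xs =>
    haveI : Nonempty (Fin (x :: xs).length) := ⟨⟨0, by simp⟩⟩
    (PMF.uniformOfFintype (Fin (x :: xs).length)).bind fun i =>
      let p := (x :: xs).get i
      let rest := (x :: xs).eraseIdx i
      (rquickCost (rest.filter fun y => decide (y < p))).bind fun c₁ =>
        (rquickCost (rest.filter fun y => decide (p < y))).map fun c₂ =>
          rest.length + c₁ + c₂
  termination_by l => l.length
  decreasing_by
    all_goals
      calc (List.filter _ ((x :: xs).eraseIdx i)).length
          ≤ ((x :: xs).eraseIdx i).length := List.length_filter_le _ _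
        _ < (x :: xs).length := by
            have := i.isLt
            rw [List.length_eraseIdx]
            split <;> simp_all

open ENNReal

namespace RQAux


/-- Closed form for the expected number of comparisons. -/
noncomputable def e (n : ℕ) : ℝ := 2 * ((n : ℝ) + 1) * harmonicNum n - 4 * n

lemma harmonicNum_zero : harmonicNum 0 = 0 := by simp [harmonicNum]

lemma harmonicNum_succ (n : ℕ) :
    harmonicNum (n + 1) = harmonicNum n + 1 / (n + 1) := by
  unfold harmonicNum
  rw [Finset.sum_Icc_succ_top (by omega : 1 ≤ n + 1)]
  push_cast
  ring

lemma e_zero : e 0 = 0 := by simp [e, harmonicNum_zero]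

lemma e_step (n : ℕ) :
    ((n : ℝ) + 1) * e (n + 1) = ((n : ℝ) + 2) * e n + 2 * n := by
  have h1 : (n : ℝ) + 1 ≠ 0 := by positivity
  unfold e
  rw [harmonicNum_succ]
  push_cast
  field_simp
  ring

lemma e_nonneg (n : ℕ) : 0 ≤ e n := by
  induction n with
  | zero => rw [e_zero]
  | succ n ih =>
      have h := e_step n
      nlinarith [Nat.cast_nonneg (α := ℝ) n]

lemma e_rec (n : ℕ) :
    (n : ℝ) * e n = (n : ℝ) * ((n : ℝ) - 1) + 2 * ∑ r ∈ Finset.range n, e r := by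
  induction n with
  | zero => simp
  | succ n ih =>
      rw [Finset.sum_range_succ]
      have h := e_step n
      push_cast
      linarith



/-- Expected value of a `PMF ℕ`, in `ℝ≥0∞`. -/
noncomputable def Ex (p : PMF ℕ) : ℝ≥0∞ := ∑' k, p k * k

lemma Ex_pure (n : ℕ) : Ex (PMF.pure n) = n := by
  unfold Ex
  rw [tsum_eq_single n]
  · simp [PMF.pure_apply]
  · intro b hb
    simp [PMF.pure_apply, hb]

lemma Ex_bind {β : Type*} (p : PMF β) (f : β → PMF ℕ) :
    Ex (p.bind f) = ∑' b, p b * Ex (f b) := by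
  unfold Ex
  simp only [PMF.bind_apply]
  calc ∑' (k : ℕ), (∑' (b : β), p b * (f b) k) * (k : ℝ≥0∞)
      = ∑' (k : ℕ) (b : β), p b * ((f b) k * k) := by
        congr 1; ext k; rw [← ENNReal.tsum_mul_right]; congr 1; ext b; ring
    _ = ∑' (b : β) (k : ℕ), p b * ((f b) k * k) := ENNReal.tsum_comm
    _ = ∑' (b : β), p b * ∑' (k : ℕ), (f b) k * k := by
        congr 1; ext b; rw [ENNReal.tsum_mul_left]

lemma tsum_pmf_const_add (p : PMF ℕ) (A : ℝ≥0∞) :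
    ∑' b : ℕ, p b * (A + b) = A + Ex p := by
  unfold Ex
  simp only [mul_add]
  rw [ENNReal.tsum_add, ENNReal.tsum_mul_right, p.tsum_coe, one_mul]

lemma Ex_map_const_add (p : PMF ℕ) (m : ℕ) :
    Ex (p.map (fun c => m + c)) = m + Ex p := by
  rw [PMF.map, Ex_bind]
  have : ∀ b : ℕ, Ex ((PMF.pure ∘ fun c => m + c) b) = ((m : ℝ≥0∞) + b) := by
    intro b
    simp only [Function.comp_apply]
    rw [Ex_pure]
    push_cast
    rfl
  simp only [this]
  exact tsum_pmf_const_add p m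


variable {α : Type*} [LinearOrder α]


lemma filter_length_lt (L : List α) (q : α → Bool) (a : α) (ha : a ∈ L)
    (hqa : q a = false) : (L.filter q).length < L.length := by
  obtain ⟨s, t, rfl⟩ := List.append_of_mem ha
  simp only [List.filter_append, List.filter_cons, hqa, List.length_append,
    List.length_cons, Bool.false_eq_true, if_false]
  have h1 := List.length_filter_le q s
  have h2 := List.length_filter_le q t
  omega

/-- Rank of `a` in `l`: the number of elements smaller than `a`. -/
def Rk (l : List α) (a : α) : ℕ := (l.filter fun y => decide (y < a)).length

lemma Rk_lt_length (l : List α) (a : α) (ha : a ∈ l) : Rk l a < l.length :=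
  filter_length_lt l _ a ha (by simp)

lemma Rk_strict (l : List α) {a b : α} (ha : a ∈ l) (hab : a < b) :
    Rk l a < Rk l b := by
  have key : l.filter (fun y => decide (y < a)) =
      (l.filter fun y => decide (y < b)).filter (fun y => decide (y < a)) := by
    rw [List.filter_filter]
    apply List.filter_congr
    intro y _
    rcases Classical.em (y < a) with h | h
    · simp [h, lt_trans h hab]
    · simp [h]
  have hmem : a ∈ l.filter fun y => decide (y < b) := by
    rw [List.mem_filter]
    exact ⟨ha, by simpa using hab⟩
  unfold Rk
  rw [key]
  exact filter_length_lt _ _ a hmem (by simp)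

lemma filter_eraseIdx (l : List α) (i : Fin l.length) (q : α → Bool)
    (hq : q (l.get i) = false) :
    (l.eraseIdx i).filter q = l.filter q := by
  conv_rhs => rw [← List.take_append_drop i l,
    List.drop_eq_getElem_cons i.isLt]
  rw [List.eraseIdx_eq_take_drop_succ, List.filter_append, List.filter_append,
    List.filter_cons]
  simp only [List.get_eq_getElem] at hq
  simp [hq]

lemma get_not_mem_eraseIdx (l : List α) (hl : l.Nodup) (i : Fin l.length) :
    l.get i ∉ l.eraseIdx i := by
  have hdec : l = l.take i ++ l.get i :: l.drop (i + 1) := by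
    conv_lhs => rw [← List.take_append_drop i l,
      List.drop_eq_getElem_cons i.isLt]
    simp [List.get_eq_getElem]
  rw [List.eraseIdx_eq_take_drop_succ]
  have : (l.take i ++ l.get i :: l.drop (i + 1)).Nodup := by rw [← hdec]; exact hl
  rw [List.nodup_middle, List.nodup_cons] at this
  exact this.1

lemma length_filter_gt_eraseIdx (l : List α) (hl : l.Nodup) (i : Fin l.length) :
    ((l.eraseIdx i).filter fun y => decide (y < l.get i)).length +
      ((l.eraseIdx i).filter fun y => decide (l.get i < y)).length
      = l.length - 1 := by
  have hlen : (l.eraseIdx i).length = l.length - 1 :=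
    List.length_eraseIdx_of_lt i.isLt
  have hcongr : (l.eraseIdx i).filter (fun y => decide (l.get i < y)) =
      (l.eraseIdx i).filter (fun y => !(decide (y < l.get i))) := by
    apply List.filter_congr
    intro y hy
    have hne : y ≠ l.get i := by
      rintro rfl
      exact get_not_mem_eraseIdx l hl i hy
    simp only [List.get_eq_getElem] at hne
    rcases lt_trichotomy y l[(i : ℕ)] with h | h | h
    · simp [h, not_lt_of_gt h]
    · exact absurd h hne
    · simp [h, not_lt_of_gt h]
  rw [hcongr, ← List.length_eq_length_filter_add, hlen]

lemma Ex_bind_map (q₁ q₂ : PMF ℕ) (m : ℕ) :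
    Ex (q₁.bind fun c₁ => q₂.map fun c₂ => m + c₁ + c₂)
      = ((m : ℝ≥0∞) + Ex q₂) + Ex q₁ := by
  rw [Ex_bind]
  have h : ∀ c₁ : ℕ, Ex (q₂.map fun c₂ => m + c₁ + c₂)
      = ((m : ℝ≥0∞) + Ex q₂) + c₁ := by
    intro c₁
    rw [show (fun c₂ => m + c₁ + c₂) = (fun c₂ => (m + c₁) + c₂) from rfl,
      Ex_map_const_add]
    push_cast
    ring
  simp only [h]
  rw [tsum_pmf_const_add]

lemma key (N : ℕ) : ∀ (l : List α), l.length ≤ N → l.Nodup →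
    Ex (rquickCost l) = ENNReal.ofReal (e l.length) := by
  induction N with
  | zero =>
      intro l h _
      obtain rfl : l = [] := List.length_eq_zero_iff.mp (Nat.le_zero.mp h)
      rw [rquickCost]
      simp [Ex_pure, e_zero]
  | succ N ih =>
      intro l hlen hnd
      cases l with
      | nil =>
          rw [rquickCost]
          simp [Ex_pure, e_zero]
      | cons x xs =>
          set l := x :: xs with hl
          set n := l.length with hn
          have hn1 : 1 ≤ n := by simp [hn, hl]
          -- expectation of each branch
          have hterm : ∀ i : Fin n,
              Ex ((rquickCost ((l.eraseIdx i).filter fun y => decide (y < l.get i))).bind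
                fun c₁ => (rquickCost ((l.eraseIdx i).filter fun y => decide (l.get i < y))).map
                  fun c₂ => (l.eraseIdx i).length + c₁ + c₂)
              = ENNReal.ofReal (((n : ℝ) - 1) + e (n - 1 - Rk l (l.get i)) + e (Rk l (l.get i))) := by
            intro i
            have hmem : l.get i ∈ l := l.get_mem i
            have hrk : Rk l (l.get i) < n := Rk_lt_length l _ hmem
            have hsm : ((l.eraseIdx i).filter fun y => decide (y < l.get i))
                = l.filter fun y => decide (y < l.get i) :=
              filter_eraseIdx l i _ (by simp)
            have hsml : ((l.eraseIdx i).filter fun y => decide (y < l.get i)).length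
                = Rk l (l.get i) := by rw [hsm]; rfl
            have hsum := length_filter_gt_eraseIdx l hnd i
            have hbgl : ((l.eraseIdx i).filter fun y => decide (l.get i < y)).length
                = n - 1 - Rk l (l.get i) := by omega
            have herl : (l.eraseIdx i).length = n - 1 :=
              List.length_eraseIdx_of_lt i.isLt
            have hnd_er : (l.eraseIdx i).Nodup :=
              (List.eraseIdx_sublist l i).nodup hnd
            have h1 : Ex (rquickCost ((l.eraseIdx i).filter fun y => decide (y < l.get i)))
                = ENNReal.ofReal (e (Rk l (l.get i))) := by
              rw [← hsml]
              apply ih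
              · rw [hsml]; omega
              · exact (List.filter_sublist.nodup hnd_er)
            have h2 : Ex (rquickCost ((l.eraseIdx i).filter fun y => decide (l.get i < y)))
                = ENNReal.ofReal (e (n - 1 - Rk l (l.get i))) := by
              rw [← hbgl]
              apply ih
              · rw [hbgl]; omega
              · exact (List.filter_sublist.nodup hnd_er)
            rw [Ex_bind_map, h1, h2, herl]
            rw [show (((n : ℕ) - 1 : ℕ) : ℝ≥0∞) = ENNReal.ofReal (((n : ℕ) - 1 : ℕ) : ℝ) from
              (ENNReal.ofReal_natCast _).symm]
            rw [← ENNReal.ofReal_add (Nat.cast_nonneg _) (e_nonneg _),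
              ← ENNReal.ofReal_add (add_nonneg (Nat.cast_nonneg _) (e_nonneg _)) (e_nonneg _)]
            congr 2
            push_cast [Nat.cast_sub hn1]
            ring
          -- unfold one step of the recursion
          rw [rquickCost, Ex_bind, tsum_fintype]
          simp only [PMF.uniformOfFintype_apply, Fintype.card_fin]
          rw [Finset.sum_congr rfl (fun i _ => by rw [hterm i])]
          -- reindex by the rank bijection
          have hR : ∀ i : Fin n, Rk l (l.get i) < n :=
            fun i => Rk_lt_length l _ (l.get_mem i)
          set R : Fin n → Fin n := fun i => ⟨Rk l (l.get i), hR i⟩ with hRdef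
          have hinj : Function.Injective R := by
            intro i j hij
            by_contra hne
            have hgetne : l.get i ≠ l.get j := fun h =>
              hne ((List.nodup_iff_injective_get.mp hnd) h)
            have hvij : Rk l (l.get i) = Rk l (l.get j) := congrArg Fin.val hij
            rcases lt_or_gt_of_ne hgetne with h | h
            · exact absurd hvij (Nat.ne_of_lt (Rk_strict l (l.get_mem i) h))
            · exact absurd hvij.symm (Nat.ne_of_lt (Rk_strict l (l.get_mem j) h))
          have hbij : Function.Bijective R := Finite.injective_iff_bijective.mp hinj
          have hre : ∀ i : Fin n,
              ENNReal.ofReal (((n : ℝ) - 1) + e (n - 1 - Rk l (l.get i)) + e (Rk l (l.get i)))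
              = (fun j : Fin n =>
                  ENNReal.ofReal (((n : ℝ) - 1) + e (n - 1 - (j : ℕ)) + e (j : ℕ))) (R i) :=
            fun i => rfl
          calc ∑ i : Fin n, ((n : ℝ≥0∞))⁻¹ *
                ENNReal.ofReal (((n : ℝ) - 1) + e (n - 1 - Rk l (l.get i)) + e (Rk l (l.get i)))
              = (n : ℝ≥0∞)⁻¹ * ∑ i : Fin n,
                  (fun j : Fin n =>
                    ENNReal.ofReal (((n : ℝ) - 1) + e (n - 1 - (j : ℕ)) + e (j : ℕ))) (R i) := by
                rw [← Finset.mul_sum]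
            _ = (n : ℝ≥0∞)⁻¹ * ∑ j : Fin n,
                  ENNReal.ofReal (((n : ℝ) - 1) + e (n - 1 - (j : ℕ)) + e (j : ℕ)) := by
                congr 1
                exact hbij.sum_comp
                  (fun j : Fin n => ENNReal.ofReal (((n : ℝ) - 1) + e (n - 1 - (j : ℕ)) + e (j : ℕ)))
            _ = (n : ℝ≥0∞)⁻¹ * ∑ j ∈ Finset.range n,
                  ENNReal.ofReal (((n : ℝ) - 1) + e (n - 1 - j) + e j) := by
                rw [Fin.sum_univ_eq_sum_range (fun j => ENNReal.ofReal (((n : ℝ) - 1) + e (n - 1 - j) + e j))]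
            _ = (n : ℝ≥0∞)⁻¹ * ENNReal.ofReal
                  (∑ j ∈ Finset.range n, (((n : ℝ) - 1) + e (n - 1 - j) + e j)) := by
                rw [ENNReal.ofReal_sum_of_nonneg]
                intro j hj
                have h1 := e_nonneg (n - 1 - j)
                have h2 := e_nonneg j
                have h3 : (1 : ℝ) ≤ n := by exact_mod_cast hn1
                linarith
            _ = (n : ℝ≥0∞)⁻¹ * ENNReal.ofReal ((n : ℝ) * e n) := by
                congr 1
                rw [Finset.sum_add_distrib, Finset.sum_add_distrib,
                  Finset.sum_range_reflect (fun j => e j) n, Finset.sum_const,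
                  Finset.card_range, e_rec n]
                push_cast
                ring
            _ = ENNReal.ofReal (e n) := by
                rw [ENNReal.ofReal_mul (by positivity), ENNReal.ofReal_natCast,
                  ← mul_assoc, ENNReal.inv_mul_cancel (by exact_mod_cast (by omega : n ≠ 0)) (natCast_ne_top n), one_mul]

end RQAux

theorem rquick_expected_comparisons {α : Type*} [LinearOrder α]
    (l : List α) (hl : l.Nodup) :
    ∑' k : ℕ, ((rquickCost l) k).toReal * k =
      2 * ((l.length : ℝ) + 1) * harmonicNum l.length - 4 * l.length := by
  have hkey := RQAux.key l.length l le_rfl hl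
  calc ∑' k : ℕ, ((rquickCost l) k).toReal * (k : ℝ)
      = ∑' k : ℕ, ((rquickCost l) k * k).toReal := by
        refine tsum_congr fun k => ?_
        rw [ENNReal.toReal_mul]
        simp
    _ = (∑' k : ℕ, (rquickCost l) k * k).toReal :=
        (ENNReal.tsum_toReal_eq fun k =>
          ENNReal.mul_ne_top ((rquickCost l).apply_ne_top k) (ENNReal.natCast_ne_top k)).symm
    _ = (ENNReal.ofReal (RQAux.e l.length)).toReal := by
        have h : RQAux.Ex (rquickCost l) = ∑' k : ℕ, (rquickCost l) k * k := rfl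
        rw [← h, hkey]
    _ = RQAux.e l.length := ENNReal.toReal_ofReal (RQAux.e_nonneg _)
    _ = 2 * ((l.length : ℝ) + 1) * harmonicNum l.length - 4 * l.length := rfl
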